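/- Let V be a finite-dimensional real inner product space of dimension n and K a symmetric bilinear form on V with associated self-adjoint operator having eigenvalues λ₁ ≤ λ₂ ≤ ... ≤ λₙ. Then for any k-dimensional subspace W of V, the trace of the restriction of K to W (computed with the induced inner product) is at least λ₁ + λ₂ + ... + λ_k. -/

import Mathlib

open scoped RealInnerProductSpace

lemma aux_schur {n k : ℕ} (hkn : k ≤ n) (lam : Fin n → ℝ) (hmono : Monotone lam)
    (s : Fin n → ℝ) (h0 : ∀ j, 0 ≤ s j) (h1 : ∀ j, s j ≤ 1)
    (hsum : ∑ j, s j = k) :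
    ∑ i : Fin k, lam (Fin.castLE hkn i) ≤ ∑ j, lam j * s j := by
  rcases Nat.eq_zero_or_pos k with hk | hk
  · subst hk
    have hz : ∀ j ∈ Finset.univ, s j = 0 :=
      (Finset.sum_eq_zero_iff_of_nonneg (fun j _ => h0 j)).mp (by simpa using hsum)
    simp only [Finset.univ_eq_empty, Finset.sum_empty]
    rw [Finset.sum_congr rfl (fun j hj => by rw [hz j hj, mul_zero])]
    simp
  · have hk1n : k - 1 < n := lt_of_lt_of_le (Nat.sub_lt hk one_pos) hkn
    set μ := lam ⟨k - 1, hk1n⟩ with hμ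
    have key : ∀ j : Fin n, (if (j : ℕ) < k then lam j - μ else 0) ≤ (lam j - μ) * s j := by
      intro j
      by_cases hj : (j : ℕ) < k
      · rw [if_pos hj]
        have hle : lam j ≤ μ := hmono (show j ≤ ⟨k-1, hk1n⟩ from by
          simp only [Fin.le_def]; omega)
        nlinarith [h1 j, h0 j]
      · rw [if_neg hj]
        have hge : μ ≤ lam j := hmono (show (⟨k-1, hk1n⟩ : Fin n) ≤ j from by
          simp only [Fin.le_def]; omega)
        nlinarith [h0 j]
    have hsumle : ∑ j : Fin n, (if (j : ℕ) < k then lam j - μ else 0) ≤ ∑ j : Fin n, (lam j - μ) * s j :=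
      Finset.sum_le_sum fun j _ => key j
    have himg : (Finset.univ : Finset (Fin k)).map (Fin.castLEEmb hkn)
        = Finset.univ.filter (fun j : Fin n => (j : ℕ) < k) := by
      ext j
      simp only [Finset.mem_map, Finset.mem_univ, true_and, Finset.mem_filter,
        Fin.castLEEmb_apply]
      constructor
      · rintro ⟨i, rfl⟩; exact i.isLt
      · intro hj; exact ⟨⟨(j : ℕ), hj⟩, by ext; simp⟩
    have hreindex : ∑ j : Fin n, (if (j : ℕ) < k then lam j - μ else 0)
        = ∑ i : Fin k, (lam (Fin.castLE hkn i) - μ) := by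
      rw [← Finset.sum_filter, ← himg, Finset.sum_map]
      rfl
    have e1 : ∑ i : Fin k, (lam (Fin.castLE hkn i) - μ)
        = (∑ i : Fin k, lam (Fin.castLE hkn i)) - k * μ := by
      rw [Finset.sum_sub_distrib]
      simp [mul_comm]
    have e2 : ∑ j : Fin n, (lam j - μ) * s j = (∑ j, lam j * s j) - k * μ := by
      have : ∑ j : Fin n, (lam j - μ) * s j = ∑ j, (lam j * s j - μ * s j) := by
        congr 1; ext j; ring
      rw [this, Finset.sum_sub_distrib, ← Finset.mul_sum, hsum]; ring
    rw [hreindex, e1, e2] at hsumle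
    linarith

theorem stmt_0
    {V : Type*} [NormedAddCommGroup V] [InnerProductSpace ℝ V]
    {n k : ℕ} (hkn : k ≤ n)
    (hdim : Module.finrank ℝ V = n)
    (K : V →ₗ[ℝ] V) (hK : K.IsSymmetric)
    (lam : Fin n → ℝ) (hmono : Monotone lam)
    (b : OrthonormalBasis (Fin n) ℝ V) (hb : ∀ i, K (b i) = lam i • b i)
    (W : Submodule ℝ V) (hW : Module.finrank ℝ W = k)
    (e : Fin k → V) (he : Orthonormal ℝ e) (heW : ∀ i, e i ∈ W)
    (hspan : Submodule.span ℝ (Set.range e) = W) :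
    ∑ i : Fin k, lam (Fin.castLE hkn i) ≤ ∑ i : Fin k, ⟪K (e i), e i⟫ := by
  -- coefficients
  set c : Fin k → Fin n → ℝ := fun i j => ⟪b j, e i⟫ with hc
  have hinner : ∀ x y : V, ⟪x, y⟫ = ∑ j : Fin n, ⟪b j, x⟫ * ⟪b j, y⟫ := by
    intro x y
    rw [← b.repr.inner_map_map x y, PiLp.inner_apply]
    simp [b.repr_apply_apply]
    exact Finset.sum_congr rfl fun j _ => mul_comm _ _
  -- expand ⟪K (e i), e i⟫
  have hexp : ∀ i : Fin k, ⟪K (e i), e i⟫ = ∑ j : Fin n, lam j * (c i j * c i j) := by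
    intro i
    rw [hinner (K (e i)) (e i)]
    refine Finset.sum_congr rfl fun j _ => ?_
    have h1 : ⟪b j, K (e i)⟫ = lam j * ⟪b j, e i⟫ := by
      rw [← hK (b j) (e i), hb j, real_inner_smul_left]
    rw [h1, hc]
    ring
  -- row and column sums
  have hrow : ∀ i : Fin k, ∑ j : Fin n, c i j * c i j = 1 := by
    intro i
    have : ⟪e i, e i⟫ = ∑ j : Fin n, c i j * c i j := hinner (e i) (e i)
    rw [← this]
    have := he.1 i
    rw [real_inner_self_eq_norm_sq, this]; norm_num
  set s : Fin n → ℝ := fun j => ∑ i : Fin k, c i j * c i j with hs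
  have h0 : ∀ j, 0 ≤ s j := fun j => Finset.sum_nonneg fun i _ => mul_self_nonneg _
  have h1 : ∀ j, s j ≤ 1 := by
    intro j
    have hb1 : ‖b j‖ = 1 := b.orthonormal.1 j
    have hbessel := he.sum_inner_products_le (s := Finset.univ) (b j)
    calc s j = ∑ i : Fin k, ‖⟪e i, b j⟫‖ ^ 2 := by
          refine Finset.sum_congr rfl fun i _ => ?_
          rw [Real.norm_eq_abs, sq_abs, hc]
          simp only [real_inner_comm (e i) (b j)]
          ring
      _ ≤ ‖b j‖ ^ 2 := hbessel
      _ = 1 := by rw [hb1]; norm_num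
  have hsum : ∑ j : Fin n, s j = k := by
    rw [hs]
    rw [Finset.sum_comm]
    simp only [hrow]
    simp
  have := aux_schur hkn lam hmono s h0 h1 hsum
  refine this.trans_eq ?_
  rw [show ∑ j : Fin n, lam j * s j = ∑ j : Fin n, ∑ i : Fin k, lam j * (c i j * c i j) by
    refine Finset.sum_congr rfl fun j _ => ?_
    rw [hs, Finset.mul_sum], Finset.sum_comm]
  exact Finset.sum_congr rfl fun i _ => (hexp i).symm
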